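/- For every integer k ≥ 2, let H be the join of the complete graph K_{2k−3} and the cycle C_5 (the graph obtained by adding all edges between a copy of K_{2k−3} and a copy of C_5). Then the clique number of H is 2k−1, the set of odd cycle lengths of H is exactly {3, 5, …, 2k+1} (so |L_o(H)| = k and the longest odd cycle has length 2k+1 = 2|L_o(H)|+1), and the chromatic number of H is 2k = 2|L_o(H)|. -/

import Mathlib

open SimpleGraph

/-- `G` contains a cycle of length `n`. -/
def SimpleGraph.HasCycleLength {V : Type*} (G : SimpleGraph V) (n : ℕ) : Prop :=
  ∃ (v : V) (c : G.Walk v v), c.IsCycle ∧ c.length = n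

/-- `L_o(G)`: the set of odd cycle lengths of `G`. -/
def SimpleGraph.oddCycleLengths {V : Type*} (G : SimpleGraph V) : Set ℕ :=
  {n | Odd n ∧ G.HasCycleLength n}

/-- `L_e(G)`: the set of even cycle lengths of `G`. -/
def SimpleGraph.evenCycleLengths {V : Type*} (G : SimpleGraph V) : Set ℕ :=
  {n | Even n ∧ G.HasCycleLength n}

/-- `G` is 2-connected: at least 3 vertices, and deleting any single vertex
leaves a connected graph. -/
def SimpleGraph.TwoConnected {V : Type*} [Fintype V] (G : SimpleGraph V) : Prop :=
  3 ≤ Fintype.card V ∧ ∀ v : V, (G.induce {v}ᶜ).Connected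

/-- The join of two graphs: disjoint union together with all edges between the two parts. -/
def SimpleGraph.joinGraph {α β : Type*} (G₁ : SimpleGraph α) (G₂ : SimpleGraph β) :
    SimpleGraph (α ⊕ β) where
  Adj x y :=
    match x, y with
    | Sum.inl a, Sum.inl b => G₁.Adj a b
    | Sum.inr a, Sum.inr b => G₂.Adj a b
    | Sum.inl _, Sum.inr _ => True
    | Sum.inr _, Sum.inl _ => True
  symm := by
    constructor
    rintro (a | a) (b | b) h
    · exact G₁.adj_symm h
    · trivial
    · trivial
    · exact G₂.adj_symm h
  loopless := by
    constructor
    rintro (a | a) h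
    · exact G₁.irrefl h
    · exact G₂.irrefl h

namespace SimpleGraph

lemma joinGraph_adj_ll {α β : Type*} (G₁ : SimpleGraph α) (G₂ : SimpleGraph β) (a b : α) :
    (G₁.joinGraph G₂).Adj (Sum.inl a) (Sum.inl b) ↔ G₁.Adj a b := Iff.rfl

lemma joinGraph_adj_rr {α β : Type*} (G₁ : SimpleGraph α) (G₂ : SimpleGraph β) (a b : β) :
    (G₁.joinGraph G₂).Adj (Sum.inr a) (Sum.inr b) ↔ G₂.Adj a b := Iff.rfl

lemma joinGraph_adj_lr {α β : Type*} (G₁ : SimpleGraph α) (G₂ : SimpleGraph β) (a : α) (b : β) :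
    (G₁.joinGraph G₂).Adj (Sum.inl a) (Sum.inr b) := trivial

lemma joinGraph_adj_rl {α β : Type*} (G₁ : SimpleGraph α) (G₂ : SimpleGraph β) (a : α) (b : β) :
    (G₁.joinGraph G₂).Adj (Sum.inr b) (Sum.inl a) := trivial

variable {V : Type*} (G : SimpleGraph V)

/-- A walk visiting `f 0, f 1, …, f n` in order. -/
def walkOfFn (f : ℕ → V) : (n : ℕ) → (∀ i < n, G.Adj (f i) (f (i+1))) → G.Walk (f 0) (f n)
  | 0, _ => Walk.nil
  | n+1, h => (walkOfFn f n (fun i hi => h i (Nat.lt_succ_of_lt hi))).concat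
      (h n (Nat.lt_succ_self n))

lemma length_walkOfFn (f : ℕ → V) (n : ℕ) (h : ∀ i < n, G.Adj (f i) (f (i+1))) :
    (G.walkOfFn f n h).length = n := by
  induction n with
  | zero => rfl
  | succ n ih => simp [walkOfFn, ih]

lemma support_walkOfFn (f : ℕ → V) (n : ℕ) (h : ∀ i < n, G.Adj (f i) (f (i+1))) :
    (G.walkOfFn f n h).support = (List.range (n+1)).map f := by
  induction n with
  | zero => rfl
  | succ n ih => simp [walkOfFn, ih, List.range_succ, List.concat_eq_append]

lemma edges_walkOfFn (f : ℕ → V) (n : ℕ) (h : ∀ i < n, G.Adj (f i) (f (i+1))) :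
    (G.walkOfFn f n h).edges = (List.range n).map (fun i => s(f i, f (i+1))) := by
  induction n with
  | zero => rfl
  | succ n ih => simp [walkOfFn, ih, List.range_succ, List.concat_eq_append]

lemma hasCycleLength_mk (n : ℕ) (hn : 2 ≤ n) (f : ℕ → V)
    (hinj : ∀ i ≤ n, ∀ j ≤ n, f i = f j → i = j)
    (hadj : ∀ i < n, G.Adj (f i) (f (i+1)))
    (hlast : G.Adj (f n) (f 0)) : G.HasCycleLength (n+1) := by
  refine ⟨f n, Walk.cons hlast (G.walkOfFn f n hadj), ?_, ?_⟩
  · rw [Walk.cons_isCycle_iff]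
    refine ⟨?_, ?_⟩
    · rw [Walk.isPath_def, G.support_walkOfFn]
      refine List.Nodup.map_on ?_ List.nodup_range
      intro x hx y hy hxy
      rw [List.mem_range] at hx hy
      exact hinj x (by omega) y (by omega) hxy
    · rw [G.edges_walkOfFn]
      simp only [List.mem_map, List.mem_range]
      rintro ⟨i, hi, he⟩
      rw [Sym2.eq_iff] at he
      rcases he with ⟨h1, h2⟩ | ⟨h1, h2⟩
      · have := hinj i (by omega) n le_rfl h1
        omega
      · have h0 := hinj i (by omega) 0 (by omega) h1
        have hn1 := hinj (i+1) (by omega) n le_rfl h2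
        omega
  · simp [G.length_walkOfFn]

end SimpleGraph

/-- For `k ≥ 2`, the join `H` of `K_{2k-3}` and `C_5` satisfies
`w(H) = 2k-1`, `L_o(H) = {3, 5, …, 2k+1}` (so `|L_o(H)| = k`), and `χ(H) = 2k`. -/
theorem join_complete_cycle5_odd (k : ℕ) (hk : 2 ≤ k) :
    let H := (⊤ : SimpleGraph (Fin (2 * k - 3))).joinGraph (SimpleGraph.cycleGraph 5)
    H.cliqueNum = 2 * k - 1 ∧
      H.oddCycleLengths = {n | Odd n ∧ 3 ≤ n ∧ n ≤ 2 * k + 1} ∧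
      (H.oddCycleLengths).ncard = k ∧
      H.chromaticNumber = ((2 * k : ℕ) : ℕ∞) := by
  intro H
  have hm : 1 ≤ 2 * k - 3 := by omega
  -- ## Clique number
  have key : ∀ s : Finset (Fin (2*k-3) ⊕ Fin 5), H.IsClique s → s.card ≤ 2*k-1 := by
    intro s hs
    have h1 : (s.filter (fun x => x.isLeft = true)).card ≤ 2*k-3 := by
      have hsub : s.filter (fun x => x.isLeft = true) ⊆
          Finset.univ.image (Sum.inl : Fin (2*k-3) → _) := by
        intro x hx
        rw [Finset.mem_filter] at hx
        obtain ⟨a, rfl⟩ := Sum.isLeft_iff.mp hx.2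
        simp
      calc (s.filter (fun x => x.isLeft = true)).card
          ≤ (Finset.univ.image (Sum.inl : Fin (2*k-3) → _)).card := Finset.card_le_card hsub
        _ ≤ (Finset.univ : Finset (Fin (2*k-3))).card := Finset.card_image_le
        _ = 2*k-3 := by simp
    have h2 : (s.filter (fun x => ¬ x.isLeft = true)).card ≤ 2 := by
      by_contra h
      push_neg at h
      obtain ⟨a, ha, b, hb, c, hc, hab, hac, hbc⟩ := Finset.two_lt_card.mp h
      rw [Finset.mem_filter] at ha hb hc
      obtain ⟨a', rfl⟩ := Sum.isRight_iff.mp (Sum.not_isLeft.mp ha.2)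
      obtain ⟨b', rfl⟩ := Sum.isRight_iff.mp (Sum.not_isLeft.mp hb.2)
      obtain ⟨c', rfl⟩ := Sum.isRight_iff.mp (Sum.not_isLeft.mp hc.2)
      have hab' : (SimpleGraph.cycleGraph 5).Adj a' b' := hs ha.1 hb.1 hab
      have hac' : (SimpleGraph.cycleGraph 5).Adj a' c' := hs ha.1 hc.1 hac
      have hbc' : (SimpleGraph.cycleGraph 5).Adj b' c' := hs hb.1 hc.1 hbc
      have htri : ∀ x y z : Fin 5, (SimpleGraph.cycleGraph 5).Adj x y →
          (SimpleGraph.cycleGraph 5).Adj x z → (SimpleGraph.cycleGraph 5).Adj y z → False := by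
        decide
      exact htri _ _ _ hab' hac' hbc'
    have h3 := Finset.card_filter_add_card_filter_not
      (s := s) (p := fun x => x.isLeft = true)
    omega
  have hclique : H.cliqueNum = 2*k-1 := by
    refine le_antisymm ?_ ?_
    · obtain ⟨s, hs⟩ := H.exists_isNClique_cliqueNum
      rw [← hs.card_eq]
      exact key s hs.isClique
    · have hc : H.IsClique (((Finset.univ.image (Sum.inl : Fin (2*k-3) → _)) ∪
          {Sum.inr 0, Sum.inr 1} : Finset (Fin (2*k-3) ⊕ Fin 5)) : Set _) := by
        intro x hx y hy hxy
        simp only [Finset.coe_union, Set.mem_union, Finset.coe_image, Finset.coe_univ,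
          Set.image_univ, Set.mem_range, Finset.coe_insert, Set.mem_insert_iff,
          Finset.coe_singleton, Set.mem_singleton_iff] at hx hy
        rcases hx with ⟨a, rfl⟩ | (rfl | rfl) <;> rcases hy with ⟨b, rfl⟩ | (rfl | rfl)
        · exact (SimpleGraph.joinGraph_adj_ll ..).mpr
            ((SimpleGraph.top_adj ..).mpr (fun h => hxy (by rw [h])))
        · exact SimpleGraph.joinGraph_adj_lr ..
        · exact SimpleGraph.joinGraph_adj_lr ..
        · exact SimpleGraph.joinGraph_adj_rl ..
        · exact absurd rfl hxy
        · exact (SimpleGraph.joinGraph_adj_rr ..).mpr (by decide)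
        · exact SimpleGraph.joinGraph_adj_rl ..
        · exact (SimpleGraph.joinGraph_adj_rr ..).mpr (by decide)
        · exact absurd rfl hxy
      have hcard : (((Finset.univ.image (Sum.inl : Fin (2*k-3) → _)) ∪
          {Sum.inr 0, Sum.inr 1} : Finset (Fin (2*k-3) ⊕ Fin 5))).card = 2*k-1 := by
        rw [Finset.card_union_of_disjoint]
        · rw [Finset.card_image_of_injective _ Sum.inl_injective]
          rw [Finset.card_pair (by simp)]
          simp only [Finset.card_univ, Fintype.card_fin]
          omega
        · rw [Finset.disjoint_left]
          rintro x hx hx'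
          simp only [Finset.mem_image] at hx
          obtain ⟨a, _, rfl⟩ := hx
          simp at hx'
      calc 2*k-1 = (((Finset.univ.image (Sum.inl : Fin (2*k-3) → _)) ∪
          {Sum.inr 0, Sum.inr 1} : Finset (Fin (2*k-3) ⊕ Fin 5))).card := hcard.symm
        _ ≤ H.cliqueNum := SimpleGraph.IsClique.card_le_cliqueNum (tc := hc)
  -- ## Cycle lengths: upper bound
  have hlen_le : ∀ n, H.HasCycleLength n → 3 ≤ n ∧ n ≤ 2*k+2 := by
    rintro n ⟨v, c, hc, rfl⟩
    refine ⟨hc.three_le_length, ?_⟩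
    have h1 : c.support.tail.length ≤ Fintype.card (Fin (2*k-3) ⊕ Fin 5) :=
      hc.support_nodup.length_le_card
    have h2 : c.support.length = c.length + 1 := c.length_support
    have h3 : Fintype.card (Fin (2*k-3) ⊕ Fin 5) = 2*k+2 := by
      simp only [Fintype.card_sum, Fintype.card_fin]
      omega
    rw [List.length_tail, h2, h3] at h1
    omega
  -- ## Cycle lengths: constructions
  have hhas : ∀ n, Odd n → 3 ≤ n → n ≤ 2*k+1 → H.HasCycleLength n := by
    rintro n ⟨t, ht⟩ h3 hle
    obtain ⟨p, rfl⟩ : ∃ p, n = p + 1 := ⟨n - 1, by omega⟩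
    rcases le_or_gt (p+1) (2*k-1) with hcase | hcase
    · -- cycle through inr 0, inr 1, and p-1 left vertices
      refine H.hasCycleLength_mk p (by omega)
        (fun i => if i = 0 then Sum.inr 0 else if i = 1 then Sum.inr 1 else
          Sum.inl ⟨(i-2) % (2*k-3), Nat.mod_lt _ (by omega)⟩) ?_ ?_ ?_
      · intro i hi j hj hij
        have e1 : (i-2) % (2*k-3) = i-2 := Nat.mod_eq_of_lt (by omega)
        have e2 : (j-2) % (2*k-3) = j-2 := Nat.mod_eq_of_lt (by omega)
        split_ifs at hij <;> simp_all [Fin.ext_iff] <;> omega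
      · intro i hi
        rcases i with _ | _ | j
        · rw [if_pos rfl, if_neg (by omega), if_pos rfl]
          exact (SimpleGraph.joinGraph_adj_rr ..).mpr (by decide)
        · rw [if_neg (by omega), if_pos rfl, if_neg (by omega), if_neg (by omega)]
          exact SimpleGraph.joinGraph_adj_rl ..
        · rw [if_neg (by omega), if_neg (by omega), if_neg (by omega), if_neg (by omega)]
          refine (SimpleGraph.joinGraph_adj_ll ..).mpr ?_
          simp only [SimpleGraph.top_adj, ne_eq, Fin.mk.injEq]
          have e1 : (j+2-2) % (2*k-3) = j := Nat.mod_eq_of_lt (by omega)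
          have e2 : (j+3-2) % (2*k-3) = j+1 := Nat.mod_eq_of_lt (by omega)
          rw [e1, e2]
          omega
      · rw [if_neg (by omega), if_neg (by omega), if_pos rfl]
        exact SimpleGraph.joinGraph_adj_lr ..
    · -- n = 2k+1 : cycle through inr 0..3 and all left vertices
      have hp : p = 2*k := by omega
      subst hp
      refine H.hasCycleLength_mk (2*k) (by omega)
        (fun i => if h : i < 4 then Sum.inr ⟨i, by omega⟩ else
          Sum.inl ⟨(i-4) % (2*k-3), Nat.mod_lt _ (by omega)⟩) ?_ ?_ ?_
      · intro i hi j hj hij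
        have e1 : (i-4) % (2*k-3) = i-4 := Nat.mod_eq_of_lt (by omega)
        have e2 : (j-4) % (2*k-3) = j-4 := Nat.mod_eq_of_lt (by omega)
        split_ifs at hij <;> simp_all [Fin.ext_iff] <;> omega
      · intro i hi
        rcases lt_or_ge i 3 with h4 | h4
        · rw [dif_pos (by omega), dif_pos (by omega)]
          refine (SimpleGraph.joinGraph_adj_rr ..).mpr ?_
          have hstep : ∀ x y : Fin 5, y.val = x.val + 1 →
              (SimpleGraph.cycleGraph 5).Adj x y := by decide
          exact hstep _ _ (by simp)
        · rcases eq_or_lt_of_le h4 with h5 | h5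
          · rw [dif_pos (by omega), dif_neg (by omega)]
            exact SimpleGraph.joinGraph_adj_rl ..
          · rw [dif_neg (by omega), dif_neg (by omega)]
            refine (SimpleGraph.joinGraph_adj_ll ..).mpr ?_
            simp only [SimpleGraph.top_adj, ne_eq, Fin.mk.injEq]
            have e1 : (i-4) % (2*k-3) = i-4 := Nat.mod_eq_of_lt (by omega)
            have e2 : (i+1-4) % (2*k-3) = i-3 := Nat.mod_eq_of_lt (by omega)
            rw [e1, e2]
            omega
      · rw [dif_neg (by omega), dif_pos (by omega)]
        exact SimpleGraph.joinGraph_adj_lr ..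
  -- ## The set of odd cycle lengths
  have hset : H.oddCycleLengths = {n | Odd n ∧ 3 ≤ n ∧ n ≤ 2*k+1} := by
    ext n
    simp only [SimpleGraph.oddCycleLengths, Set.mem_setOf_eq]
    constructor
    · rintro ⟨hodd, hcyc⟩
      obtain ⟨h3, hle⟩ := hlen_le n hcyc
      obtain ⟨t, ht⟩ := hodd
      exact ⟨⟨t, ht⟩, h3, by omega⟩
    · rintro ⟨hodd, h3, hle⟩
      exact ⟨hodd, hhas n hodd h3 hle⟩
  -- ## ncard
  have hncard : ({n | Odd n ∧ 3 ≤ n ∧ n ≤ 2*k+1} : Set ℕ).ncard = k := by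
    have hEq : ({n | Odd n ∧ 3 ≤ n ∧ n ≤ 2*k+1} : Set ℕ) =
        ↑((Finset.range k).image (fun i => 2*i+3)) := by
      ext n
      simp only [Set.mem_setOf_eq, Finset.coe_image, Finset.coe_range, Set.mem_image,
        Set.mem_Iio]
      constructor
      · rintro ⟨⟨t, ht⟩, h3, hle⟩
        exact ⟨t - 1, by omega, by omega⟩
      · rintro ⟨i, hi, rfl⟩
        exact ⟨⟨i+1, by ring⟩, by omega, by omega⟩
    rw [hEq, Set.ncard_coe_finset,
      Finset.card_image_of_injective _ (fun a b h => by omega), Finset.card_range]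
  -- ## Chromatic number
  have hcol : H.Colorable (2*k) := by
    refine ⟨SimpleGraph.Coloring.mk
      (fun x => match x with
        | Sum.inl a => (⟨a.val, by omega⟩ : Fin (2*k))
        | Sum.inr b => (⟨2*k-3 + (if b.val = 4 then 2 else b.val % 2), by
            have := Nat.mod_lt b.val (show 0 < 2 by omega)
            split_ifs <;> omega⟩ : Fin (2*k)))
      ?_⟩
    rintro (a | a) (b | b) hvw
    · have hab : a ≠ b := hvw
      simp only [ne_eq, Fin.mk.injEq]
      exact fun h => hab (Fin.ext h)
    · simp only [ne_eq, Fin.mk.injEq]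
      have := a.isLt
      omega
    · simp only [ne_eq, Fin.mk.injEq]
      have := b.isLt
      omega
    · have hab : (SimpleGraph.cycleGraph 5).Adj a b := hvw
      have hne : ∀ x y : Fin 5, (SimpleGraph.cycleGraph 5).Adj x y →
          (if x.val = 4 then 2 else x.val % 2) ≠ (if y.val = 4 then 2 else y.val % 2) := by
        decide
      have h' := hne _ _ hab
      simp only [ne_eq, Fin.mk.injEq]
      omega
  have hncol : ¬ H.Colorable (2*k-1) := by
    rintro ⟨C⟩
    have hinj : Function.Injective (fun a : Fin (2*k-3) => C (Sum.inl a)) := by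
      intro a a' h
      by_contra hne
      exact C.valid ((SimpleGraph.joinGraph_adj_ll ..).mpr hne) h
    set S : Finset (Fin (2*k-1)) := Finset.univ.image (fun a => C (Sum.inl a)) with hS
    have hScard : S.card = 2*k-3 := by
      rw [hS, Finset.card_image_of_injective _ hinj]
      simp
    have hTcard : Sᶜ.card = 2 := by
      rw [Finset.card_compl, hScard]
      simp only [Fintype.card_fin]
      omega
    obtain ⟨x, y, hxy, hT⟩ := Finset.card_eq_two.mp hTcard
    have hmem : ∀ b : Fin 5, C (Sum.inr b) = x ∨ C (Sum.inr b) = y := by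
      intro b
      have hnotS : C (Sum.inr b) ∉ S := by
        rw [hS]
        simp only [Finset.mem_image, Finset.mem_univ, true_and]
        rintro ⟨a, ha⟩
        exact C.valid (SimpleGraph.joinGraph_adj_lr ..) ha
      have : C (Sum.inr b) ∈ Sᶜ := Finset.mem_compl.mpr hnotS
      rw [hT] at this
      simpa using this
    have hadj5 : ∀ b b' : Fin 5, (SimpleGraph.cycleGraph 5).Adj b b' →
        C (Sum.inr b) ≠ C (Sum.inr b') :=
      fun b b' h => C.valid ((SimpleGraph.joinGraph_adj_rr ..).mpr h)
    have h01 := hadj5 0 1 (by decide)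
    have h12 := hadj5 1 2 (by decide)
    have h23 := hadj5 2 3 (by decide)
    have h34 := hadj5 3 4 (by decide)
    have h40 := hadj5 4 0 (by decide)
    have hfin' : ∀ a b c d e : Bool, ¬(a ≠ b ∧ b ≠ c ∧ c ≠ d ∧ d ≠ e ∧ e ≠ a) := by decide
    have hfin : ∀ a b c d e : Bool, a ≠ b → b ≠ c → c ≠ d → d ≠ e → e ≠ a → False :=
      fun a b c d e h1 h2 h3 h4 h5 => hfin' a b c d e ⟨h1, h2, h3, h4, h5⟩
    have hb : ∀ u v : Fin (2*k-1), (u = x ∨ u = y) → (v = x ∨ v = y) → u ≠ v →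
        decide (u = x) ≠ decide (v = x) := by
      rintro u v (rfl | rfl) (rfl | rfl) h <;>
        first
          | exact absurd rfl h
          | simp [h, Ne.symm h]
    exact hfin (decide (C (Sum.inr 0) = x)) (decide (C (Sum.inr 1) = x))
      (decide (C (Sum.inr 2) = x)) (decide (C (Sum.inr 3) = x)) (decide (C (Sum.inr 4) = x))
      (hb _ _ (hmem 0) (hmem 1) h01)
      (hb _ _ (hmem 1) (hmem 2) h12) (hb _ _ (hmem 2) (hmem 3) h23)
      (hb _ _ (hmem 3) (hmem 4) h34) (hb _ _ (hmem 4) (hmem 0) h40)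
  have hchrom : H.chromaticNumber = ((2 * k : ℕ) : ℕ∞) := by
    refine le_antisymm hcol.chromaticNumber_le ?_
    have hlt : ((2*k-1 : ℕ) : ℕ∞) < H.chromaticNumber := by
      by_contra h
      push_neg at h
      exact hncol (SimpleGraph.chromaticNumber_le_iff_colorable.mp h)
    have h' := (ENat.add_one_le_iff (ENat.coe_ne_top _)).mpr hlt
    calc ((2*k : ℕ) : ℕ∞) = (((2*k-1) + 1 : ℕ) : ℕ∞) := by
          congr 1
          omega
      _ = ((2*k-1 : ℕ) : ℕ∞) + 1 := by push_cast; ring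
      _ ≤ H.chromaticNumber := h'
  exact ⟨hclique, hset, by rw [hset]; exact hncard, hchrom⟩
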